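/- Let p be an odd prime and ζ a primitive fifth root of unity. For u, v ∈ ℤ_p and any nonnegative integer k with k ≤ ⟨-u⟩_p (the least nonnegative residue of -u mod p), the product of Pochhammer symbols (u+vp)_k (u+vpζ)_k (u+vpζ²)_k (u+vpζ³)_k (u+vpζ⁴)_k is congruent to (u)_k⁵ · (1 + v⁵p⁵ · Σ_{j=0}^{k-1} 1/(u+j)⁵) modulo p⁶. -/

import Mathlib

open Finset Polynomial
open scoped Classical

lemma asc_eval_prod {S : Type*} [CommSemiring S] (k : ℕ) (x : S) :
    (ascPochhammer S k).eval x = ∏ j ∈ Finset.range k, (x + j) := by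
  induction k with
  | zero => simp
  | succ n ih => rw [ascPochhammer_succ_eval, Finset.prod_range_succ, ih]

lemma nthRootsFinset_eq_image {R : Type*} [CommRing R] [IsDomain R] {ζ : R}
    (hζ : IsPrimitiveRoot ζ 5) :
    Polynomial.nthRootsFinset 5 (1 : R) = (Finset.range 5).image (fun i => ζ ^ i) := by
  classical
  symm
  apply Finset.eq_of_subset_of_card_le
  · intro x hx
    simp only [Finset.mem_image, Finset.mem_range] at hx
    obtain ⟨i, _, rfl⟩ := hx
    rw [Polynomial.mem_nthRootsFinset (by norm_num : 0 < 5)]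
    rw [← pow_mul, mul_comm, pow_mul, hζ.pow_eq_one, one_pow]
  · rw [hζ.card_nthRootsFinset, Finset.card_image_of_injOn]
    · simp
    · intro a ha b hb hab
      exact hζ.pow_inj (Finset.mem_range.mp ha) (Finset.mem_range.mp hb) hab

lemma prod_five_roots {R : Type*} [CommRing R] [IsDomain R] {ζ : R}
    (hζ : IsPrimitiveRoot ζ 5) (x y : R) :
    ∏ i ∈ Finset.range 5, (x + y * ζ ^ i) = x ^ 5 + y ^ 5 := by
  classical
  have h := hζ.pow_add_pow_eq_prod_add_mul x y (by decide : Odd 5)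
  rw [nthRootsFinset_eq_image hζ] at h
  rw [Finset.prod_image (fun a ha b hb hab =>
    hζ.pow_inj (Finset.mem_range.mp ha) (Finset.mem_range.mp hb) hab)] at h
  rw [h]
  exact Finset.prod_congr rfl fun i _ => by ring

lemma prod_sub_prod_dvd {S : Type*} [CommRing S] (u w : S) (k : ℕ) :
    w ∣ ∏ j ∈ Finset.range k, ((u + j) ^ 5 + w) - ∏ j ∈ Finset.range k, (u + j) ^ 5 := by
  induction k with
  | zero => simp
  | succ n ih =>
    rw [Finset.prod_range_succ, Finset.prod_range_succ]
    have heq : (∏ j ∈ Finset.range n, ((u + j) ^ 5 + w)) * ((u + n) ^ 5 + w) -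
        (∏ j ∈ Finset.range n, (u + j) ^ 5) * (u + n) ^ 5 =
        ((∏ j ∈ Finset.range n, ((u + j) ^ 5 + w)) -
          ∏ j ∈ Finset.range n, (u + j) ^ 5) * (u + n) ^ 5 +
        w * ∏ j ∈ Finset.range n, ((u + j) ^ 5 + w) := by ring
    rw [heq]
    exact dvd_add (ih.mul_right _) (dvd_mul_right w _)

lemma key_lemma {S : Type*} [CommRing S] (u w : S) (k : ℕ)
    (hu : ∀ j < k, IsUnit (u + (j : S))) :
    w ^ 2 ∣ ∏ j ∈ Finset.range k, ((u + j) ^ 5 + w) -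
      (∏ j ∈ Finset.range k, (u + j) ^ 5) *
        (1 + w * ∑ j ∈ Finset.range k, Ring.inverse ((u + (j : S)) ^ 5)) := by
  induction k with
  | zero => simp
  | succ n ih =>
    have ih' := ih (fun j hj => hu j (hj.trans (Nat.lt_succ_self n)))
    have hbr : (u + (n : S)) ^ 5 * Ring.inverse ((u + (n : S)) ^ 5) = 1 :=
      Ring.mul_inverse_cancel _ ((hu n (Nat.lt_succ_self n)).pow 5)
    rw [Finset.prod_range_succ, Finset.prod_range_succ, Finset.sum_range_succ]
    set Pf := ∏ j ∈ Finset.range n, ((u + j) ^ 5 + w) with hPf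
    set Pg := ∏ j ∈ Finset.range n, (u + (j : S)) ^ 5 with hPg
    set Sn := ∑ j ∈ Finset.range n, Ring.inverse ((u + (j : S)) ^ 5) with hSn
    have heq : Pf * ((u + n) ^ 5 + w) -
        Pg * (u + n) ^ 5 * (1 + w * (Sn + Ring.inverse ((u + (n : S)) ^ 5))) =
        (Pf - Pg * (1 + w * Sn)) * (u + n) ^ 5 + w * (Pf - Pg) := by
      linear_combination (-(w * Pg)) * hbr
    rw [heq]
    refine dvd_add (ih'.mul_right _) ?_
    rw [pow_two]
    exact mul_dvd_mul_left w (prod_sub_prod_dvd u w n)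

lemma isUnit_of_lt_appr {p : ℕ} [Fact p.Prime] (u : PadicInt p) {j k : ℕ}
    (hj : j < k) (hk : k ≤ (-u).appr 1) : IsUnit (u + (j : PadicInt p)) := by
  by_contra h
  set m := (-u).appr 1 with hm
  have hmlt : m < p := by have := PadicInt.appr_lt (-u) 1; simpa using this
  have h1 : (p : PadicInt p) ∣ (-u - m) := by
    have := PadicInt.appr_spec 1 (-u)
    rwa [pow_one, Ideal.mem_span_singleton] at this
  have h2 : (p : PadicInt p) ∣ (u + j) := by
    rw [← PadicInt.norm_lt_one_iff_dvd]
    exact PadicInt.not_isUnit_iff.mp h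
  have h3 : (p : PadicInt p) ∣ (((j : ℤ) - (m : ℤ) : ℤ) : PadicInt p) := by
    have := dvd_add h2 h1
    push_cast
    convert this using 1
    ring
  have h4 : (p : ℤ) ∣ ((j : ℤ) - (m : ℤ)) := by
    rw [← PadicInt.norm_int_lt_one_iff_dvd]
    rw [PadicInt.norm_lt_one_iff_dvd]
    exact_mod_cast h3
  have hjm : j < m := lt_of_lt_of_le hj hk
  have h6 : p ∣ (m - j) := by
    have h5 : (p : ℤ) ∣ ((m : ℤ) - (j : ℤ)) := dvd_sub_comm.mp h4
    have hcast : ((m - j : ℕ) : ℤ) = (m : ℤ) - (j : ℤ) := by omega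
    exact_mod_cast hcast ▸ h5
  have := Nat.le_of_dvd (by omega) h6
  omega

/-- For an odd prime `p`, a primitive fifth root of unity `ζ`, `u, v ∈ ℤ_p` and
`k ≤ ⟨-u⟩_p`, the product `(u+vp)_k (u+vpζ)_k (u+vpζ²)_k (u+vpζ³)_k (u+vpζ⁴)_k` is congruent to
`(u)_k⁵ (1 + v⁵p⁵ Σ_{j=0}^{k-1} 1/(u+j)⁵)` modulo `p⁶`. -/
theorem stmt1 (p : ℕ) [Fact p.Prime] (hp : Odd p)
    (R : Type*) [CommRing R] [IsDomain R] [Algebra (PadicInt p) R]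
    (ζ : R) (hζ : IsPrimitiveRoot ζ 5)
    (u v : PadicInt p) (k : ℕ) (hk : k ≤ (-u).appr 1) :
    (p : R) ^ 6 ∣
      (∏ i ∈ Finset.range 5,
        (ascPochhammer R k).eval
          (algebraMap (PadicInt p) R u + algebraMap (PadicInt p) R (v * p) * ζ ^ i)) -
      algebraMap (PadicInt p) R
        (((ascPochhammer (PadicInt p) k).eval u) ^ 5 *
          (1 + v ^ 5 * (p : PadicInt p) ^ 5 *
            ∑ j ∈ Finset.range k, Ring.inverse ((u + (j : PadicInt p)) ^ 5))) := by
  set φ := algebraMap (PadicInt p) R with hφ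
  -- Step 1: rewrite LHS product
  have step1 : (∏ i ∈ Finset.range 5,
      (ascPochhammer R k).eval (φ u + φ (v * p) * ζ ^ i)) =
      φ (∏ j ∈ Finset.range k, ((u + j) ^ 5 + (v * p) ^ 5)) := by
    simp_rw [asc_eval_prod]
    rw [Finset.prod_comm]
    have : ∀ j ∈ Finset.range k, (∏ i ∈ Finset.range 5, (φ u + φ (v * p) * ζ ^ i + (j : R))) =
        ((φ u + (j : R)) ^ 5 + (φ (v * p)) ^ 5) := by
      intro j _
      rw [← prod_five_roots hζ (φ u + (j : R)) (φ (v * p))]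
      exact Finset.prod_congr rfl fun i _ => by ring
    rw [Finset.prod_congr rfl this, map_prod]
    refine Finset.prod_congr rfl fun j _ => ?_
    rw [map_add, map_pow, map_pow, map_add, map_natCast]
  rw [step1, ← map_sub]
  -- Step 2: work in ℤ_p
  have hkey : (p : PadicInt p) ^ 6 ∣
      (∏ j ∈ Finset.range k, ((u + j) ^ 5 + (v * p) ^ 5)) -
      ((ascPochhammer (PadicInt p) k).eval u) ^ 5 *
        (1 + v ^ 5 * (p : PadicInt p) ^ 5 *
          ∑ j ∈ Finset.range k, Ring.inverse ((u + (j : PadicInt p)) ^ 5)) := by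
    have hw : ∀ j : ℕ, (u + (j : PadicInt p)) ^ 5 + (v * p) ^ 5 =
        (u + (j : PadicInt p)) ^ 5 + v ^ 5 * (p : PadicInt p) ^ 5 := fun j => by ring
    simp_rw [hw]
    rw [asc_eval_prod, ← Finset.prod_pow]
    have hu : ∀ j < k, IsUnit (u + (j : PadicInt p)) :=
      fun j hj => isUnit_of_lt_appr u hj hk
    have := key_lemma u (v ^ 5 * (p : PadicInt p) ^ 5) k hu
    refine dvd_trans ?_ this
    exact ⟨v ^ 10 * (p : PadicInt p) ^ 4, by ring⟩
  obtain ⟨c, hc⟩ := hkey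
  refine ⟨φ c, ?_⟩
  rw [hc, map_mul, map_pow, map_natCast]
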